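/- arXiv:1701.08316 — 6 statements merged into one kernel-verified Lean document; each statement's English description precedes it below -/
import Mathlib

section
/- Let M_n(F) carry the elementary G-grading induced by pairwise distinct g_1,...,g_n, and suppose g ≠ e. Then for all a, c ∈ R_g and b ∈ R_{g^{-1}} one has abc = cba; i.e., x_{1,g} x_{2,g^{-1}} x_{3,g} − x_{3,g} x_{2,g^{-1}} x_{1,g} is a graded identity of M_n(F). -/
open Matrix

lemma support_lemma (F : Type*) [Field F] (G : Type*) [Group G] (n : ℕ)
    (g : Fin n → G) (c' : G) (M : Matrix (Fin n) (Fin n) F)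
    (hM : M ∈ Submodule.span F
      {M : Matrix (Fin n) (Fin n) F | ∃ i j : Fin n,
        (g i)⁻¹ * g j = c' ∧ M = Matrix.single i j 1}) :
    ∀ i j, M i j ≠ 0 → (g i)⁻¹ * g j = c' := by
  have : ∀ i j, (g i)⁻¹ * g j ≠ c' → M i j = 0 := by
    induction hM using Submodule.span_induction with
    | mem x hx =>
      obtain ⟨i0, j0, hg, rfl⟩ := hx
      intro i j hij
      rw [Matrix.single]
      simp only [Matrix.of_apply]
      rw [if_neg]
      rintro ⟨rfl, rfl⟩
      exact hij hg
    | zero => intro i j _; rfl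
    | add x y _ _ hx hy => intro i j h; simp [Matrix.add_apply, hx i j h, hy i j h]
    | smul r x _ hx => intro i j h; simp [Matrix.smul_apply, hx i j h]
  intro i j hne
  by_contra h
  exact hne (this i j h)

/-- With the elementary grading on M_n(F) induced by pairwise distinct
g_1,...,g_n and g ≠ e, for all a, c ∈ R_g and b ∈ R_{g⁻¹} one has abc = cba;
i.e. x_{1,g} x_{2,g⁻¹} x_{3,g} − x_{3,g} x_{2,g⁻¹} x_{1,g} is a graded identity. -/
theorem stmt_5 (F : Type*) [Field F] (G : Type*) [Group G] (n : ℕ)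
    (g : Fin n → G) (hinj : Function.Injective g)
    (R : G → Submodule F (Matrix (Fin n) (Fin n) F))
    (hR : ∀ c : G, R c = Submodule.span F
      {M : Matrix (Fin n) (Fin n) F | ∃ i j : Fin n,
        (g i)⁻¹ * g j = c ∧ M = Matrix.single i j 1})
    (c : G) (hc : c ≠ 1) :
    ∀ a ∈ R c, ∀ b ∈ R c⁻¹, ∀ d ∈ R c, a * b * d = d * b * a := by
  intro a ha b hb d hd
  rw [hR c] at ha hd
  rw [hR c⁻¹] at hb
  have hA := support_lemma F G n g c a ha
  have hB := support_lemma F G n g c⁻¹ b hb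
  have hD := support_lemma F G n g c d hd
  -- key: if x i j ≠ 0, b j k ≠ 0, y k l ≠ 0 with x,y supported on c, then k = i and l = j
  have key : ∀ (x y : Matrix (Fin n) (Fin n) F),
      (∀ i j, x i j ≠ 0 → (g i)⁻¹ * g j = c) →
      (∀ i j, y i j ≠ 0 → (g i)⁻¹ * g j = c) →
      ∀ i j k l, x i j ≠ 0 → b j k ≠ 0 → y k l ≠ 0 → k = i ∧ l = j := by
    intro x y hx hy i j k l hxij hbjk hykl
    have h1 := hx i j hxij
    have h2 := hB j k hbjk
    have h3 := hy k l hykl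
    have hk : k = i := by
      apply hinj
      have : g k = g j * c⁻¹ := by
        rw [← h2]; group
      rw [this, ← h1]; group
    subst hk
    refine ⟨rfl, hinj ?_⟩
    have : g l = g k * c := by rw [← h3]; group
    rw [this, ← h1]; group
  have term : ∀ i j k l, a i j * b j k * d k l = d i j * b j k * a k l := by
    intro i j k l
    by_cases hbjk : b j k = 0
    · simp [hbjk]
    by_cases h1 : a i j ≠ 0 ∧ d k l ≠ 0
    · obtain ⟨hk, hl⟩ := key a d hA hD i j k l h1.1 hbjk h1.2
      subst hk; subst hl; ring
    by_cases h2 : d i j ≠ 0 ∧ a k l ≠ 0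
    · obtain ⟨hk, hl⟩ := key d a hD hA i j k l h2.1 hbjk h2.2
      subst hk; subst hl; ring
    · push_neg at h1 h2
      rcases eq_or_ne (a i j) 0 with h | h
      · rcases eq_or_ne (d i j) 0 with h' | h'
        · simp [h, h']
        · simp [h, h2 h']
      · rcases eq_or_ne (d i j) 0 with h' | h'
        · simp [h1 h, h']
        · simp [h1 h, h2 h']
  ext i l
  simp only [Matrix.mul_apply, Finset.sum_mul]
  rw [Finset.sum_comm]
  nth_rewrite 2 [Finset.sum_comm]
  refine Finset.sum_congr rfl fun j _ => Finset.sum_congr rfl fun k _ => ?_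
  exact term i j k l
end

section
/- With notation as before: if the domain D_ν of ν = ĥ_r ∘ ⋯ ∘ ĥ_1 is nonempty, then the i-th row of the product A_{1,h_1}⋯A_{r,h_r} of generic matrices is nonzero if and only if i ∈ D_ν, and in that case the unique nonzero entry of row i lies in column ν(i) and equals the monomial y^1_{i, ĥ_1(i)} y^2_{ĥ_1(i), ĥ_2 ĥ_1(i)} ⋯ (a single monomial in the commuting variables). -/
open Matrix
open scoped Classical

lemma key_stmt13 (F : Type*) [Field F] (G : Type*) [Group G] (n : ℕ)
    (g : Fin n → G) (hinj : Function.Injective g)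
    (A : ℕ → G → Matrix (Fin n) (Fin n) (MvPolynomial (ℕ × Fin n × Fin n) F))
    (hA : ∀ (m : ℕ) (c : G) (p q : Fin n),
      A m c p q = if g p * c = g q then MvPolynomial.X (m, p, q) else 0) :
    ∀ (r : ℕ) (w : Fin r → ℕ) (f : Fin r → G) (i j : Fin n),
      ((List.ofFn fun k : Fin r => A (w k) (f k)).prod i j ≠ 0 →
        ∃ s : Fin (r + 1) → Fin n, s 0 = i ∧
          (∀ k : Fin r, g (s k.castSucc) * f k = g (s k.succ)) ∧ s (Fin.last r) = j) ∧
      (∀ s : Fin (r + 1) → Fin n, s 0 = i →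
        (∀ k : Fin r, g (s k.castSucc) * f k = g (s k.succ)) →
        (j = s (Fin.last r) →
          (List.ofFn fun k : Fin r => A (w k) (f k)).prod i j =
            ∏ k : Fin r, MvPolynomial.X (w k, s k.castSucc, s k.succ)) ∧
        (j ≠ s (Fin.last r) →
          (List.ofFn fun k : Fin r => A (w k) (f k)).prod i j = 0)) := by
  intro r
  induction r with
  | zero =>
    intro w f i j
    constructor
    · intro hne
      refine ⟨fun _ => i, rfl, fun k => k.elim0, ?_⟩
      by_contra hij
      exact hne (by simp [Matrix.one_apply_ne hij])
    · intro s hs0 _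
      have hlast : s (Fin.last 0) = i := by
        rw [show (Fin.last 0) = 0 from rfl, hs0]
      constructor
      · intro hj
        subst hj
        rw [hlast]
        simp [Matrix.one_apply]
      · intro hj
        rw [hlast] at hj
        simp [Matrix.one_apply_ne (Ne.symm hj)]
  | succ r IH =>
    intro w f i j
    have hrow : ∀ j' : Fin n,
        (List.ofFn fun k : Fin (r + 1) => A (w k) (f k)).prod i j' =
        ∑ q, (if g i * f 0 = g q then MvPolynomial.X (w 0, i, q) else 0) *
          (List.ofFn fun k : Fin r => A (w k.succ) (f k.succ)).prod q j' := by
      intro j'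
      rw [List.ofFn_succ, List.prod_cons, Matrix.mul_apply]
      simp [hA]
    by_cases hq : ∃ q : Fin n, g i * f 0 = g q
    · obtain ⟨q0, hq0⟩ := hq
      have hsum : ∀ j' : Fin n,
          (List.ofFn fun k : Fin (r + 1) => A (w k) (f k)).prod i j' =
          MvPolynomial.X (w 0, i, q0) *
            (List.ofFn fun k : Fin r => A (w k.succ) (f k.succ)).prod q0 j' := by
        intro j'
        rw [hrow j']
        rw [Finset.sum_eq_single q0]
        · simp [hq0]
        · intro q _ hqq
          have : ¬ (g i * f 0 = g q) := fun hc => hqq (hinj (hc ▸ hq0).symm ▸ rfl)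
          simp [this]
        · intro hmem; exact absurd (Finset.mem_univ q0) hmem
      constructor
      · intro hne
        rw [hsum j] at hne
        have hP : (List.ofFn fun k : Fin r => A (w k.succ) (f k.succ)).prod q0 j ≠ 0 :=
          fun hz => hne (by rw [hz, mul_zero])
        obtain ⟨s', hs'0, hs'chain, hs'last⟩ :=
          (IH (fun k => w k.succ) (fun k => f k.succ) q0 j).1 hP
        refine ⟨Fin.cases i s', by simp, ?_, ?_⟩
        · intro k
          induction k using Fin.cases with
          | zero =>
            simp only [Fin.castSucc_zero, Fin.cases_zero, Fin.cases_succ, hs'0]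
            exact hq0
          | succ k' =>
            rw [← Fin.succ_castSucc]
            simpa using hs'chain k'
        · rw [← Fin.succ_last]
          simpa only [Fin.cases_succ] using hs'last
      · intro s hs0 hchain
        set s' : Fin (r + 1) → Fin n := fun k => s k.succ with hs'
        have hs1 : s' 0 = q0 := by
          have h0 := hchain 0
          rw [Fin.castSucc_zero, hs0] at h0
          exact hinj (h0.symm.trans hq0)
        have hchain' : ∀ k : Fin r, g (s' k.castSucc) * f k.succ = g (s' k.succ) := by
          intro k
          have := hchain k.succ
          rwa [← Fin.succ_castSucc] at this
        have hlast' : s' (Fin.last r) = s (Fin.last (r + 1)) := by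
          rw [hs', ← Fin.succ_last]
        have IH2 := (IH (fun k => w k.succ) (fun k => f k.succ) q0 j).2 s' hs1 hchain'
        constructor
        · intro hj
          rw [hsum j, (IH2.1 (by rw [hj, ← hlast']))]
          conv_rhs => rw [Fin.prod_univ_succ]
          congr 1
          have h1 : s (Fin.succ (0 : Fin (r + 1))) = q0 := hs1
          rw [Fin.castSucc_zero, hs0, h1]
        · intro hj
          rw [hsum j, IH2.2 (by rwa [hlast']), mul_zero]
    · push_neg at hq
      constructor
      · intro hne
        exfalso
        apply hne
        rw [hrow j]
        apply Finset.sum_eq_zero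
        intro q _
        simp [hq q]
      · intro s hs0 hchain
        exfalso
        have h0 := hchain 0
        rw [Fin.castSucc_zero, hs0] at h0
        exact hq _ h0
/-- If the domain D_ν of ν = ĥ_r ∘ ⋯ ∘ ĥ_1 is nonempty, then the i-th row
of the product A_{1,h_1}⋯A_{r,h_r} of generic matrices is nonzero iff i ∈ D_ν (i.e. iff
there is a sequence s with s_1 = i and g_{s_k} h_k = g_{s_{k+1}}); in that case the unique
nonzero entry of row i is in column ν(i) = s_{r+1} and equals the single monomial
y¹_{s_1,s_2} y²_{s_2,s_3} ⋯ yʳ_{s_r,s_{r+1}}. -/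
theorem stmt_13 (F : Type*) [Field F] (G : Type*) [Group G] (n : ℕ)
    (g : Fin n → G) (hinj : Function.Injective g)
    (r : ℕ) (h : Fin r → G)
    (A : ℕ → G → Matrix (Fin n) (Fin n) (MvPolynomial (ℕ × Fin n × Fin n) F))
    (hA : ∀ (m : ℕ) (c : G) (p q : Fin n),
      A m c p q = if g p * c = g q then MvPolynomial.X (m, p, q) else 0)
    (hne : ∃ s : Fin (r + 1) → Fin n,
      ∀ k : Fin r, g (s k.castSucc) * h k = g (s k.succ)) :
    ∀ i : Fin n,
      ((∃ j : Fin n, (List.ofFn fun k : Fin r => A (k : ℕ) (h k)).prod i j ≠ 0) ↔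
        (∃ s : Fin (r + 1) → Fin n, s 0 = i ∧
          ∀ k : Fin r, g (s k.castSucc) * h k = g (s k.succ))) ∧
      (∀ s : Fin (r + 1) → Fin n, s 0 = i →
        (∀ k : Fin r, g (s k.castSucc) * h k = g (s k.succ)) →
        (∀ j : Fin n, j ≠ s (Fin.last r) →
          (List.ofFn fun k : Fin r => A (k : ℕ) (h k)).prod i j = 0) ∧
        (List.ofFn fun k : Fin r => A (k : ℕ) (h k)).prod i (s (Fin.last r)) =
          ∏ k : Fin r, MvPolynomial.X ((k : ℕ), s k.castSucc, s k.succ)) := by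
  intro i
  have key := key_stmt13 F G n g hinj A hA r (fun k => (k : ℕ)) h
  constructor
  · constructor
    · rintro ⟨j, hj⟩
      obtain ⟨s, hs0, hchain, -⟩ := (key i j).1 hj
      exact ⟨s, hs0, hchain⟩
    · rintro ⟨s, hs0, hchain⟩
      refine ⟨s (Fin.last r), ?_⟩
      rw [((key i (s (Fin.last r))).2 s hs0 hchain).1 rfl]
      exact Finset.prod_ne_zero_iff.mpr fun k _ => MvPolynomial.X_ne_zero _
  · intro s hs0 hchain
    refine ⟨fun j hj => ((key i j).2 s hs0 hchain).2 hj, ?_⟩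
    exact ((key i (s (Fin.last r))).2 s hs0 hchain).1 rfl
end

section
/- A monomial x_{i_1,h_1}^{ε_1} ⋯ x_{i_r,h_r}^{ε_r} (each ε_k either * or nothing) is a (G,*)-identity of M_n(F) with the transpose involution and the elementary grading induced by pairwise distinct (g_1,...,g_n) if and only if the domain of the composed partial map (h_r^{ε_r})^ ∘ ⋯ ∘ (h_1^{ε_1})^ on {1,...,n} is empty, where h^* denotes h^{-1}. -/
open Matrix

private lemma aux_prod_row {F : Type*} [Field F] {n : ℕ} :
    ∀ (r : ℕ) (f : Fin r → Matrix (Fin n) (Fin n) F) (s : Fin (r + 1) → Fin n),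
    (∀ k : Fin r, f k (s k.castSucc) = Pi.single (s k.succ) 1) →
    (List.ofFn f).prod (s 0) = Pi.single (s (Fin.last r)) 1 := by
  intro r
  induction r with
  | zero =>
    intro f s _
    simp only [List.ofFn_zero, List.prod_nil]
    funext q
    simp [Matrix.one_apply, Pi.single_apply, eq_comm]
  | succ r ih =>
    intro f s hf
    rw [List.ofFn_succ, List.prod_cons]
    have h0 : f 0 (s 0) = Pi.single (s 1) 1 := by simpa using hf 0
    have ihr := ih (fun i => f i.succ) (fun i => s i.succ) (by
      intro k
      have := hf k.succ
      rwa [← Fin.succ_castSucc] at this)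
    funext q
    rw [Matrix.mul_apply]
    have hterm : ∀ j, f 0 (s 0) j * (List.ofFn fun i => f i.succ).prod j q
        = if j = s 1 then (List.ofFn fun i => f i.succ).prod j q else 0 := by
      intro j
      rw [h0, Pi.single_apply]
      by_cases hj : j = s 1 <;> simp [hj]
    rw [Finset.sum_congr rfl fun j _ => hterm j, Finset.sum_ite_eq']
    have h1 : (List.ofFn fun i => f i.succ).prod (s 1) q
        = (Pi.single (s (Fin.last (r + 1))) 1 : Fin n → F) q := by
      have := congrFun ihr q
      simpa [Fin.succ_last] using this
    simpa using h1

private lemma aux_path {F : Type*} [Field F] {n : ℕ} :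
    ∀ (r : ℕ) (f : Fin r → Matrix (Fin n) (Fin n) F) (p q : Fin n),
    (List.ofFn f).prod p q ≠ 0 →
    ∃ s : Fin (r + 1) → Fin n, s 0 = p ∧ s (Fin.last r) = q ∧
      ∀ k : Fin r, f k (s k.castSucc) (s k.succ) ≠ 0 := by
  intro r
  induction r with
  | zero =>
    intro f p q hpq
    simp only [List.ofFn_zero, List.prod_nil] at hpq
    have hpq' : p = q := by
      by_contra hc
      exact hpq (Matrix.one_apply_ne hc)
    exact ⟨fun _ => p, rfl, hpq'.symm ▸ rfl, fun k => k.elim0⟩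
  | succ r ih =>
    intro f p q hpq
    rw [List.ofFn_succ, List.prod_cons] at hpq
    rw [Matrix.mul_apply] at hpq
    obtain ⟨j, _, hj⟩ := Finset.exists_ne_zero_of_sum_ne_zero hpq
    have hj1 : f 0 p j ≠ 0 := fun hzero => hj (by rw [hzero, zero_mul])
    have hj2 : (List.ofFn fun i => f i.succ).prod j q ≠ 0 :=
      fun hzero => hj (by rw [hzero, mul_zero])
    obtain ⟨s', hs0, hslast, hs⟩ := ih (fun i => f i.succ) j q hj2
    refine ⟨Fin.cons p s', Fin.cons_zero _ _, ?_, ?_⟩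
    · rw [← Fin.succ_last, Fin.cons_succ]; exact hslast
    · intro k
      induction k using Fin.cases with
      | zero =>
        have e1 : (Fin.cons p s' : Fin (r + 2) → Fin n) (0 : Fin (r + 1)).castSucc = p := by
          simp
        have e2 : (Fin.cons p s' : Fin (r + 2) → Fin n) (0 : Fin (r + 1)).succ = j := by
          simp [hs0]
        rw [e1, e2]; exact hj1
      | succ k =>
        have hc : (k.succ).castSucc = (k.castSucc).succ := (Fin.succ_castSucc k).symm
        rw [hc, Fin.cons_succ, Fin.cons_succ]
        exact hs k

private lemma aux_support {F : Type*} [Field F] {n : ℕ} {G : Type*} [Group G]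
    (g : Fin n → G) (c : G) (M : Matrix (Fin n) (Fin n) F)
    (hM : M ∈ Submodule.span F {M : Matrix (Fin n) (Fin n) F | ∃ i j : Fin n,
        (g i)⁻¹ * g j = c ∧ M = Matrix.single i j 1})
    (p q : Fin n) (hpq : M p q ≠ 0) : g p * c = g q := by
  by_contra hc
  apply hpq
  let K : Submodule F (Matrix (Fin n) (Fin n) F) :=
    { carrier := {N | N p q = 0}
      add_mem' := fun {a b} ha hb => by
        simp only [Set.mem_setOf_eq, Matrix.add_apply] at *
        rw [ha, hb, add_zero]
      zero_mem' := rfl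
      smul_mem' := fun t x hx => by
        simp only [Set.mem_setOf_eq, Matrix.smul_apply] at *
        rw [hx, smul_zero] }
  have hKM : M ∈ K := by
    refine Submodule.span_le.mpr ?_ hM
    rintro N ⟨i, j, hij, rfl⟩
    show Matrix.single i j (1 : F) p q = 0
    simp only [Matrix.single, Matrix.of_apply, ite_eq_right_iff, one_ne_zero]
    rintro ⟨rfl, rfl⟩
    exact (hc (by rw [← hij, mul_inv_cancel_left])).elim
  exact hKM

private lemma aux_B_mem {F : Type*} [Field F] {n : ℕ} {G : Type*} [Group G] [DecidableEq G]
    (g : Fin n → G) (c : G) :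
    (Matrix.of fun p q : Fin n => if g p * c = g q then (1 : F) else 0) ∈
      Submodule.span F {M : Matrix (Fin n) (Fin n) F | ∃ i j : Fin n,
        (g i)⁻¹ * g j = c ∧ M = Matrix.single i j 1} := by
  have heq : (Matrix.of fun p q : Fin n => if g p * c = g q then (1 : F) else 0)
      = ∑ p : Fin n, ∑ q : Fin n,
          if g p * c = g q then Matrix.single p q (1 : F) else 0 := by
    ext i j
    simp only [Matrix.of_apply, Matrix.sum_apply]
    rw [Finset.sum_eq_single i]
    · rw [Finset.sum_eq_single j]
      · by_cases hc : g i * c = g j <;> simp [hc, Matrix.single]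
      · intro b _ hb
        by_cases hc : g i * c = g b <;> simp [hc, Matrix.single, hb]
      · simp
    · intro b _ hb
      apply Finset.sum_eq_zero
      intro x _
      by_cases hc : g b * c = g x <;> simp [hc, Matrix.single, hb]
    · simp
  rw [heq]
  refine Submodule.sum_mem _ fun p _ => Submodule.sum_mem _ fun q _ => ?_
  by_cases hc : g p * c = g q
  · rw [if_pos hc]
    exact Submodule.subset_span ⟨p, q, by rw [← hc, inv_mul_cancel_left], rfl⟩
  · rw [if_neg hc]; exact Submodule.zero_mem _


/-- A monomial x_{i_1,h_1}^{ε_1} ⋯ x_{i_r,h_r}^{ε_r} is a (G,*)-identity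
of M_n(F) (transpose involution, elementary grading by pairwise distinct g_1,...,g_n)
iff the domain of the composed partial map (h_r^{ε_r})^ ∘ ⋯ ∘ (h_1^{ε_1})^ is empty,
where h^* = h⁻¹. -/
theorem stmt_14 (F : Type*) [Field F] [Infinite F] (G : Type*) [Group G] (n : ℕ)
    (g : Fin n → G) (hinj : Function.Injective g)
    (R : G → Submodule F (Matrix (Fin n) (Fin n) F))
    (hR : ∀ c : G, R c = Submodule.span F
      {M : Matrix (Fin n) (Fin n) F | ∃ i j : Fin n,
        (g i)⁻¹ * g j = c ∧ M = Matrix.single i j 1})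
    (r : ℕ) (idx : Fin r → ℕ) (h : Fin r → G) (ε : Fin r → Bool) :
    (∀ a : ℕ × G → Matrix (Fin n) (Fin n) F, (∀ k c, a (k, c) ∈ R c) →
      (List.ofFn fun k : Fin r =>
        if ε k then (a (idx k, h k))ᵀ else a (idx k, h k)).prod = 0) ↔
    ¬ ∃ s : Fin (r + 1) → Fin n,
        ∀ k : Fin r, g (s k.castSucc) * (if ε k then (h k)⁻¹ else h k) = g (s k.succ) := by
  classical
  set eff : Fin r → G := fun k => if ε k then (h k)⁻¹ else h k with heff
  constructor
  · rintro hid ⟨s, hs⟩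
    set a : ℕ × G → Matrix (Fin n) (Fin n) F :=
      fun x => Matrix.of fun p q => if g p * x.2 = g q then (1 : F) else 0 with ha_def
    have ha : ∀ k c, a (k, c) ∈ R c := by
      intro k c
      rw [hR]
      exact aux_B_mem g c
    have h0 := hid a ha
    have hfac : (fun k : Fin r => if ε k then (a (idx k, h k))ᵀ else a (idx k, h k))
        = fun k : Fin r => Matrix.of fun p q => if g p * eff k = g q then (1 : F) else 0 := by
      funext k
      by_cases hε : ε k
      · simp only [hε, if_true, heff]
        ext p q
        simp only [Matrix.transpose_apply, Matrix.of_apply, ha_def]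
        have hiff : (g q * h k = g p) ↔ (g p * (h k)⁻¹ = g q) := by
          rw [mul_inv_eq_iff_eq_mul]; exact eq_comm
        simp [hiff]
      · simp [hε, heff, ha_def]
    rw [hfac] at h0
    have hrow : ∀ k : Fin r,
        (Matrix.of fun p q => if g p * eff k = g q then (1 : F) else 0) (s k.castSucc)
          = Pi.single (s k.succ) 1 := by
      intro k
      funext q
      have hiff : (g (s k.castSucc) * eff k = g q) ↔ (q = s k.succ) := by
        rw [hs k]
        exact ⟨fun hh => (hinj hh).symm, fun hh => by rw [hh]⟩
      simp [Pi.single_apply, hiff]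
    have := aux_prod_row r _ s hrow
    rw [h0] at this
    have := congrFun this (s (Fin.last r))
    simp at this
  · intro hns a ha
    by_contra hne
    obtain ⟨p, hp⟩ := Function.ne_iff.mp hne
    obtain ⟨q, hq⟩ := Function.ne_iff.mp hp
    obtain ⟨s, _, _, hs⟩ := aux_path r _ p q hq
    apply hns
    refine ⟨s, fun k => ?_⟩
    have hk := hs k
    by_cases hε : ε k
    · simp only [hε, if_true] at hk ⊢
      have hmem : a (idx k, h k) ∈ Submodule.span F
          {M : Matrix (Fin n) (Fin n) F | ∃ i j : Fin n,
            (g i)⁻¹ * g j = h k ∧ M = Matrix.single i j 1} := by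
        rw [← hR]; exact ha _ _
      have := aux_support g (h k) _ hmem (s k.succ) (s k.castSucc) hk
      rw [← this, mul_inv_cancel_right]
    · simp only [hε, if_false] at hk ⊢
      have hmem : a (idx k, h k) ∈ Submodule.span F
          {M : Matrix (Fin n) (Fin n) F | ∃ i j : Fin n,
            (g i)⁻¹ * g j = h k ∧ M = Matrix.single i j 1} := by
        rw [← hR]; exact ha _ _
      exact aux_support g (h k) _ hmem _ _ hk
end

section
/- A monomial x_{i_1,h_1}^{ε_1} ⋯ x_{i_r,h_r}^{ε_r} is a (G,*)-identity of M_n(F) (transpose involution, elementary grading by pairwise distinct g_1,...,g_n) if and only if the ordinary graded monomial x_{i_1, h_1^{ε_1}} ⋯ x_{i_r, h_r^{ε_r}} (where h^* := h^{-1}) is a G-graded identity of M_n(F). -/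
open Matrix

open scoped Classical in
/-- The "full shape" matrix of degree `c`: ones exactly on the degree-`c` support. -/
noncomputable def Smat {F : Type*} [Field F] {G : Type*} [Group G] {n : ℕ}
    (g : Fin n → G) (c : G) : Matrix (Fin n) (Fin n) F :=
  Matrix.of fun i j => if (g i)⁻¹ * g j = c then (1 : F) else 0

lemma Smat_apply {F : Type*} [Field F] {G : Type*} [Group G] {n : ℕ}
    (g : Fin n → G) (c : G) (i j : Fin n) (hij : (g i)⁻¹ * g j = c) :
    (Smat g c : Matrix (Fin n) (Fin n) F) i j = 1 := by
  classical
  simp [Smat, hij]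

lemma Smat_apply_ne {F : Type*} [Field F] {G : Type*} [Group G] {n : ℕ}
    (g : Fin n → G) (c : G) (i j : Fin n) (hij : (g i)⁻¹ * g j ≠ c) :
    (Smat g c : Matrix (Fin n) (Fin n) F) i j = 0 := by
  classical
  simp [Smat, hij]

lemma prod_supported_ne_zero {F : Type*} [Field F] {G : Type*} [Group G] {n : ℕ}
    (g : Fin n → G) (hinj : Function.Injective g) :
    ∀ (L : List (G × Matrix (Fin n) (Fin n) F)),
    (∀ x ∈ L, ∀ i j, (g i)⁻¹ * g j ≠ x.1 → x.2 i j = 0) →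
    ∀ p q : Fin n, (L.map Prod.snd).prod p q ≠ 0 →
      (L.map fun x => (Smat g x.1 : Matrix (Fin n) (Fin n) F)).prod p q ≠ 0 := by
  intro L
  induction L with
  | nil => intro _ p q hpq; simpa using hpq
  | cons x L ih =>
    intro hsupp p q hpq
    simp only [List.map_cons, List.prod_cons] at hpq ⊢
    rw [Matrix.mul_apply] at hpq
    obtain ⟨j, hj⟩ := Finset.exists_ne_zero_of_sum_ne_zero hpq
    have hM : x.2 p j ≠ 0 := fun hz => hj.2 (by rw [hz, zero_mul])
    have hrest : (L.map Prod.snd).prod j q ≠ 0 := fun hz => hj.2 (by rw [hz, mul_zero])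
    have hdeg : (g p)⁻¹ * g j = x.1 := by
      by_contra hc
      exact hM (hsupp x (List.mem_cons_self) p j hc)
    have hres : (L.map fun y => (Smat g y.1 : Matrix (Fin n) (Fin n) F)).prod j q ≠ 0 :=
      ih (fun y hy => hsupp y (List.mem_cons_of_mem x hy)) j q hrest
    rw [Matrix.mul_apply]
    rw [Finset.sum_eq_single j]
    · rw [Smat_apply g x.1 p j hdeg, one_mul]; exact hres
    · intro j' _ hj'
      rw [Smat_apply_ne g x.1 p j', zero_mul]
      intro hcond
      apply hj'
      apply hinj
      have h1 : g j' = g p * x.1 := by rw [← hcond]; group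
      have h2 : g j = g p * x.1 := by rw [← hdeg]; group
      rw [h1, h2]
    · intro hmem; exact absurd (Finset.mem_univ j) hmem

/-- A monomial x_{i_1,h_1}^{ε_1} ⋯ x_{i_r,h_r}^{ε_r} is a (G,*)-identity
of M_n(F) (transpose involution, elementary grading by pairwise distinct g_1,...,g_n)
iff the ordinary graded monomial x_{i_1,h_1^{ε_1}} ⋯ x_{i_r,h_r^{ε_r}} (h^* := h⁻¹)
is a G-graded identity of M_n(F). -/
theorem stmt_15 (F : Type*) [Field F] [Infinite F] (G : Type*) [Group G] (n : ℕ)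
    (g : Fin n → G) (hinj : Function.Injective g)
    (R : G → Submodule F (Matrix (Fin n) (Fin n) F))
    (hR : ∀ c : G, R c = Submodule.span F
      {M : Matrix (Fin n) (Fin n) F | ∃ i j : Fin n,
        (g i)⁻¹ * g j = c ∧ M = Matrix.single i j 1})
    (r : ℕ) (idx : Fin r → ℕ) (h : Fin r → G) (ε : Fin r → Bool) :
    (∀ a : ℕ × G → Matrix (Fin n) (Fin n) F, (∀ k c, a (k, c) ∈ R c) →
      (List.ofFn fun k : Fin r =>
        if ε k then (a (idx k, h k))ᵀ else a (idx k, h k)).prod = 0) ↔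
    (∀ b : ℕ × G → Matrix (Fin n) (Fin n) F, (∀ k c, b (k, c) ∈ R c) →
      (List.ofFn fun k : Fin r =>
        b (idx k, if ε k then (h k)⁻¹ else h k)).prod = 0) := by
  classical
  set c : Fin r → G := fun k => if ε k then (h k)⁻¹ else h k with hc
  -- support lemma for R
  have hsupp : ∀ d : G, ∀ M ∈ R d, ∀ i j, (g i)⁻¹ * g j ≠ d → M i j = 0 := by
    intro d M hM i j hij
    rw [hR d] at hM
    induction hM using Submodule.span_induction with
    | mem M hM =>
      obtain ⟨i', j', hd, rfl⟩ := hM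
      simp only [Matrix.single, Matrix.of_apply, ite_eq_right_iff]
      rintro ⟨rfl, rfl⟩
      exact absurd hd hij
    | zero => rfl
    | add M N _ _ hM hN => simp [hM, hN]
    | smul t M _ hM => simp [hM]
  -- Smat is homogeneous
  have hSmem : ∀ d : G, (Smat g d : Matrix (Fin n) (Fin n) F) ∈ R d := by
    intro d
    have heq : (Smat g d : Matrix (Fin n) (Fin n) F) =
        ∑ i : Fin n, ∑ j : Fin n,
          if (g i)⁻¹ * g j = d then Matrix.single i j (1 : F) else 0 := by
      ext p q
      simp only [Matrix.sum_apply]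
      rw [Finset.sum_eq_single p, Finset.sum_eq_single q]
      · by_cases hpq : (g p)⁻¹ * g q = d
        · rw [if_pos hpq, Smat_apply g d p q hpq]
          simp [Matrix.single]
        · rw [if_neg hpq, Smat_apply_ne g d p q hpq]
          simp
      · intro j' _ hj'
        by_cases hcond : (g p)⁻¹ * g j' = d
        · rw [if_pos hcond]
          simp only [Matrix.single, Matrix.of_apply]
          rw [if_neg (fun hh => hj' hh.2)]
        · rw [if_neg hcond]; simp
      · intro hq; exact absurd (Finset.mem_univ q) hq
      · intro i' _ hi'
        apply Finset.sum_eq_zero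
        intro j' _
        by_cases hcond : (g i')⁻¹ * g j' = d
        · rw [if_pos hcond]
          simp only [Matrix.single, Matrix.of_apply]
          rw [if_neg (fun hh => hi' hh.1)]
        · rw [if_neg hcond]; simp
      · intro hp; exact absurd (Finset.mem_univ p) hp
    rw [heq, hR d]
    apply Submodule.sum_mem
    intro i _
    apply Submodule.sum_mem
    intro j _
    by_cases hij : (g i)⁻¹ * g j = d
    · rw [if_pos hij]
      exact Submodule.subset_span ⟨i, j, hij, rfl⟩
    · rw [if_neg hij]; exact Submodule.zero_mem _
  -- transpose of Smat
  have hST : ∀ d : G, (Smat g d : Matrix (Fin n) (Fin n) F)ᵀ = Smat g d⁻¹ := by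
    intro d
    ext i j
    rw [Matrix.transpose_apply]
    by_cases hij : (g i)⁻¹ * g j = d⁻¹
    · rw [Smat_apply g d⁻¹ i j hij, Smat_apply g d j i]
      have : ((g i)⁻¹ * g j)⁻¹ = d⁻¹⁻¹ := by rw [hij]
      rw [inv_inv] at this
      rw [← this]; group
    · rw [Smat_apply_ne g d⁻¹ i j hij, Smat_apply_ne g d j i]
      intro hcond
      apply hij
      rw [← inv_inv d, ← hcond]; group
  constructor
  · intro H b hb
    have hz : (List.ofFn fun k : Fin r => (Smat g (c k) : Matrix (Fin n) (Fin n) F)).prod = 0 := by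
      have hprodeq : (List.ofFn fun k : Fin r =>
          if ε k then ((fun p : ℕ × G => (Smat g p.2 : Matrix (Fin n) (Fin n) F)) (idx k, h k))ᵀ
          else (fun p : ℕ × G => (Smat g p.2 : Matrix (Fin n) (Fin n) F)) (idx k, h k)) =
          List.ofFn fun k : Fin r => (Smat g (c k) : Matrix (Fin n) (Fin n) F) := by
        congr 1
        funext k
        by_cases hk : ε k
        · simp only [hk, if_true, hc, hST]
        · simp only [hk, if_false, hc, Bool.false_eq_true]
      have := H (fun p => Smat g p.2) (fun k d => hSmem d)
      rwa [hprodeq] at this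
    ext p q
    simp only [Matrix.zero_apply]
    by_contra hpq
    have h1 : (List.ofFn fun k : Fin r => (c k, b (idx k, c k))).map Prod.snd =
        List.ofFn fun k : Fin r => b (idx k, c k) := by
      rw [List.map_ofFn]; rfl
    have h2 : (List.ofFn fun k : Fin r => (c k, b (idx k, c k))).map (fun x => (Smat g x.1 : Matrix (Fin n) (Fin n) F)) =
        List.ofFn fun k : Fin r => (Smat g (c k) : Matrix (Fin n) (Fin n) F) := by
      rw [List.map_ofFn]; rfl
    have hA := prod_supported_ne_zero g hinj
      (List.ofFn fun k : Fin r => (c k, b (idx k, c k)))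
      (by
        intro x hx i j hij
        rw [List.mem_ofFn] at hx
        obtain ⟨k, rfl⟩ := hx
        exact hsupp (c k) _ (hb (idx k) (c k)) i j hij)
      p q
      (by rw [h1]; exact hpq)
    rw [h2, hz] at hA
    exact hA (Matrix.zero_apply p q)
  · intro H a ha
    have hz : (List.ofFn fun k : Fin r => (Smat g (c k) : Matrix (Fin n) (Fin n) F)).prod = 0 := by
      have := H (fun p => Smat g p.2) (fun k d => hSmem d)
      exact this
    ext p q
    simp only [Matrix.zero_apply]
    by_contra hpq
    have h1 : (List.ofFn fun k : Fin r =>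
        (c k, if ε k then (a (idx k, h k))ᵀ else a (idx k, h k))).map Prod.snd =
        List.ofFn fun k : Fin r => if ε k then (a (idx k, h k))ᵀ else a (idx k, h k) := by
      rw [List.map_ofFn]; rfl
    have h2 : (List.ofFn fun k : Fin r =>
        (c k, if ε k then (a (idx k, h k))ᵀ else a (idx k, h k))).map (fun x => (Smat g x.1 : Matrix (Fin n) (Fin n) F)) =
        List.ofFn fun k : Fin r => (Smat g (c k) : Matrix (Fin n) (Fin n) F) := by
      rw [List.map_ofFn]; rfl
    have hA := prod_supported_ne_zero g hinj
      (List.ofFn fun k : Fin r =>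
        (c k, if ε k then (a (idx k, h k))ᵀ else a (idx k, h k)))
      (by
        intro x hx i j hij
        rw [List.mem_ofFn] at hx
        obtain ⟨k, rfl⟩ := hx
        simp only
        by_cases hk : ε k
        · simp only [hk, if_true]
          rw [Matrix.transpose_apply]
          apply hsupp (h k) _ (ha (idx k) (h k))
          intro hcon
          apply hij
          simp only [hc, hk, if_true]
          rw [← hcon]; group
        · simp only [hk, if_false, Bool.false_eq_true]
          apply hsupp (h k) _ (ha (idx k) (h k))
          intro hcon
          apply hij
          simp only [hc, hk, if_false, Bool.false_eq_true]
          exact hcon)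
      p q
      (by rw [h1]; exact hpq)
    rw [h2, hz] at hA
    exact hA (Matrix.zero_apply p q)
end

section
/- If a graded monomial x_{i_1,h_1} ⋯ x_{i_p,h_p} is a graded identity of M_n(F) with an elementary G-grading, then it is a consequence (lies in the T_G-ideal generated by) of a graded monomial identity of M_n(F) of length at most 2n−1. -/
open Matrix

noncomputable section

/-- The free G-graded algebra: the monoid algebra of the free monoid on the graded
variables x_{k,g}, (k,g) ∈ ℕ × G. -/
abbrev FreeG (F G : Type*) [Field F] := MonoidAlgebra F (FreeMonoid (ℕ × G))

/-- Degree of a word in the graded variables. -/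
def wdeg {G : Type*} [Group G] (w : FreeMonoid (ℕ × G)) : G :=
  ((FreeMonoid.toList w).map Prod.snd).prod

/-- The graded substitution endomorphism determined by a map on variables. -/
def substHom {F G : Type*} [Field F] (v : ℕ × G → FreeG F G) : FreeG F G →ₐ[F] FreeG F G :=
  MonoidAlgebra.lift F (FreeG F G) (FreeMonoid (ℕ × G)) (FreeMonoid.lift v)

/-- A substitution is admissible when each variable of degree g is sent to a
homogeneous element of degree g. -/
def Admissible {F G : Type*} [Field F] [Group G] (v : ℕ × G → FreeG F G) : Prop :=
  ∀ (k : ℕ) (c : G), ∀ w ∈ (v (k, c)).coeff.support, wdeg w = c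

/-- The T_G-ideal generated by a set S: the smallest two-sided ideal containing all
admissible substitution instances of elements of S. -/
def TIdealGen {F G : Type*} [Field F] [Group G] (S : Set (FreeG F G)) : Set (FreeG F G) :=
  {x | ∀ I : TwoSidedIdeal (FreeG F G),
    (∀ f ∈ S, ∀ v, Admissible v → substHom v f ∈ I) → x ∈ I}

/-- The homogeneous component of degree c of the elementary grading of M_n(F). -/
def gradeR (F : Type*) {G : Type*} [Field F] [Group G] {n : ℕ} (g : Fin n → G) (c : G) :
    Submodule F (Matrix (Fin n) (Fin n) F) :=
  Submodule.span F {M : Matrix (Fin n) (Fin n) F | ∃ i j : Fin n,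
    (g i)⁻¹ * g j = c ∧ M = Matrix.single i j 1}

/-- Evaluation of the free graded algebra on a substitution of the variables by
matrices. -/
def evalHom {F G : Type*} [Field F] {n : ℕ} (a : ℕ × G → Matrix (Fin n) (Fin n) F) :
    FreeG F G →ₐ[F] Matrix (Fin n) (Fin n) F :=
  MonoidAlgebra.lift F (Matrix (Fin n) (Fin n) F) (FreeMonoid (ℕ × G)) (FreeMonoid.lift a)

/-- f is a G-graded polynomial identity of M_n(F) with the elementary grading
induced by g. -/
def IsGId {F G : Type*} [Field F] [Group G] {n : ℕ} (g : Fin n → G) (f : FreeG F G) : Prop :=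
  ∀ a : ℕ × G → Matrix (Fin n) (Fin n) F,
    (∀ k c, a (k, c) ∈ gradeR F g c) → evalHom a f = 0

set_option linter.unusedSectionVars false

namespace Stmt16Aux

variable {F G : Type*} [Field F] [Group G] {n : ℕ}

/-- prefix product of the degrees of a word -/
def pp (l : List (ℕ × G)) (t : ℕ) : G := ((l.take t).map Prod.snd).prod

lemma pp_zero (l : List (ℕ × G)) : pp l 0 = 1 := rfl

lemma pp_cons (kc : ℕ × G) (l : List (ℕ × G)) (t : ℕ) :
    pp (kc :: l) (t + 1) = kc.2 * pp l t := by simp [pp]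

lemma pp_chunk (l : List (ℕ × G)) {a b : ℕ} (hab : a ≤ b) :
    pp l a * (((l.take b).drop a).map Prod.snd).prod = pp l b := by
  have h1 : (l.take b).take a = l.take a := by rw [List.take_take, min_eq_left hab]
  conv_rhs => rw [pp, ← List.take_append_drop a (l.take b), h1]
  rw [List.map_append, List.prod_append]
  rfl

lemma chunk_append (l : List (ℕ × G)) {a b c : ℕ} (hab : a ≤ b) (hbl : b ≤ l.length)
    (hbc : b ≤ c) :
    (l.take b).drop a ++ (l.take c).drop b = (l.take c).drop a := by
  have key : l.take b ++ (l.take c).drop b = l.take c := by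
    conv_rhs => rw [← List.take_append_drop b (l.take c), List.take_take, min_eq_left hbc]
  have h2 : a ≤ (l.take b).length := by
    rw [List.length_take]; exact le_min hab (hab.trans hbl)
  conv_rhs => rw [← key, List.drop_append_of_le_length h2]

/-- a word built from a list of times -/
def mkW (s : ℕ → G) : ℕ → List ℕ → List (ℕ × G)
  | _, [] => []
  | prev, t :: ts => (Nat.pair prev t, (s prev)⁻¹ * s t) :: mkW s t ts

lemma length_mkW (s : ℕ → G) : ∀ (prev : ℕ) (ts : List ℕ), (mkW s prev ts).length = ts.length
  | _, [] => rfl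
  | prev, t :: ts => by simp [mkW, length_mkW s t ts]

lemma lift_of_ofList {A : Type*} [Semiring A] [Algebra F A] (f : ℕ × G → A)
    (l : List (ℕ × G)) :
    (MonoidAlgebra.lift F A (FreeMonoid (ℕ × G)) (FreeMonoid.lift f))
      (MonoidAlgebra.of F (FreeMonoid (ℕ × G)) (FreeMonoid.ofList l)) = (l.map f).prod := by
  rw [MonoidAlgebra.lift_of, FreeMonoid.lift_apply, FreeMonoid.toList_ofList]

end Stmt16Aux

set_option linter.unusedSectionVars false

namespace Stmt16Aux

variable {F G : Type*} [Field F] [Group G] {n : ℕ}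

lemma gradeR_entry {g : Fin n → G} {c : G} {M : Matrix (Fin n) (Fin n) F}
    (hM : M ∈ gradeR F g c) : ∀ i j, M i j ≠ 0 → g j = g i * c := by
  induction hM using Submodule.span_induction with
  | mem M hMs =>
    obtain ⟨i, j, hc, rfl⟩ := hMs
    intro i' j' hne
    have : (if i = i' ∧ j = j' then (1 : F) else 0) ≠ 0 := hne
    by_cases h : i = i' ∧ j = j'
    · obtain ⟨rfl, rfl⟩ := h
      rw [← hc, mul_inv_cancel_left]
    · exact absurd (if_neg h) this
  | zero => intro i j hne; simp at hne
  | add x y hx hy ihx ihy =>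
    intro i j hne
    by_cases h1 : x i j = 0
    · exact ihy i j (by simpa [Matrix.add_apply, h1] using hne)
    · exact ihx i j h1
  | smul r x hx ih =>
    intro i j hne
    refine ih i j fun h0 => hne ?_
    simp [Matrix.smul_apply, h0]

lemma exists_range_of_prod_ne_zero {g : Fin n → G} (a : ℕ × G → Matrix (Fin n) (Fin n) F)
    (ha : ∀ k c, a (k, c) ∈ gradeR F g c) :
    ∀ (l : List (ℕ × G)) (i j : Fin n), ((l.map a).prod) i j ≠ 0 →
      ∀ t ≤ l.length, ∃ m, g i * pp l t = g m := by
  intro l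
  induction l with
  | nil =>
    intro i j _ t ht
    simp only [List.length_nil, Nat.le_zero] at ht
    subst ht
    exact ⟨i, by simp [pp]⟩
  | cons kc l ih =>
    intro i j hne t ht
    rw [List.map_cons, List.prod_cons, Matrix.mul_apply] at hne
    obtain ⟨m, -, hm⟩ := Finset.exists_ne_zero_of_sum_ne_zero hne
    have h1 : a kc i m ≠ 0 := left_ne_zero_of_mul hm
    have h2 : ((l.map a).prod) m j ≠ 0 := right_ne_zero_of_mul hm
    have hgm : g m = g i * kc.2 := by
      have := gradeR_entry (ha kc.1 kc.2) i m
      rw [Prod.mk.eta] at this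
      exact this h1
    match t with
    | 0 => exact ⟨i, by simp [pp]⟩
    | t + 1 =>
      obtain ⟨m', hm'⟩ := ih m j h2 t (Nat.le_of_succ_le_succ ht)
      exact ⟨m', by rw [pp_cons, ← mul_assoc, ← hgm, hm']⟩

lemma isGId_of_noCover {g : Fin n → G} (l : List (ℕ × G))
    (hnc : ∀ x : G, ∃ t ≤ l.length, ∀ i : Fin n, x * pp l t ≠ g i) :
    IsGId g (MonoidAlgebra.of F (FreeMonoid (ℕ × G)) (FreeMonoid.ofList l)) := by
  intro a ha
  unfold evalHom
  rw [lift_of_ofList]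
  ext i j
  rw [Matrix.zero_apply]
  by_contra hne
  obtain ⟨t, ht, hall⟩ := hnc (g i)
  obtain ⟨m, hm⟩ := exists_range_of_prod_ne_zero a ha l i j hne t ht
  exact hall m hm

end Stmt16Aux

namespace Stmt16Aux

variable {F G : Type*} [Field F] [Group G] {n : ℕ}

lemma noCover_of_isGId {g : Fin n → G} (l : List (ℕ × G))
    (hid : IsGId g (MonoidAlgebra.of F (FreeMonoid (ℕ × G)) (FreeMonoid.ofList l))) :
    ∀ x : G, ∃ t ≤ l.length, ∀ i : Fin n, x * pp l t ≠ g i := by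
  by_contra hc
  push_neg at hc
  obtain ⟨x, hx⟩ := hc
  have hx0 : ∃ i, g i = x := by
    obtain ⟨i, hi⟩ := hx 0 (Nat.zero_le _)
    exact ⟨i, by simpa [pp] using hi.symm⟩
  haveI : Nonempty (Fin n) := ⟨hx0.choose⟩
  classical
  set φ : G → Fin n := fun y => if h : ∃ i, g i = y then h.choose else Classical.arbitrary _
    with hφdef
  have hφ : ∀ y : G, (∃ i, g i = y) → g (φ y) = y := by
    intro y hy
    rw [hφdef]
    simp only [dif_pos hy]
    exact hy.choose_spec
  set A : G → Matrix (Fin n) (Fin n) F := fun c =>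
    ∑ i : Fin n, ∑ j : Fin n,
      if φ (g i) = i ∧ φ (g j) = j ∧ (g i)⁻¹ * g j = c then Matrix.single i j 1 else 0
    with hAdef
  have hAmem : ∀ c, A c ∈ gradeR F g c := by
    intro c
    refine Submodule.sum_mem _ fun i _ => Submodule.sum_mem _ fun j _ => ?_
    split_ifs with hP
    · exact Submodule.subset_span ⟨i, j, hP.2.2, rfl⟩
    · exact Submodule.zero_mem _
  have hAentry : ∀ (c : G) (i' j' : Fin n), A c i' j' =
      if φ (g i') = i' ∧ φ (g j') = j' ∧ (g i')⁻¹ * g j' = c then 1 else 0 := by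
    intro c i' j'
    rw [hAdef]
    simp only [Matrix.sum_apply]
    rw [Finset.sum_eq_single i']
    · rw [Finset.sum_eq_single j']
      · split_ifs with h
        · simp [Matrix.single]
        · rfl
      · intro j _ hj
        split_ifs with h
        · simp [Matrix.single, hj]
        · rfl
      · intro habs; exact absurd (Finset.mem_univ j') habs
    · intro i _ hi
      refine Finset.sum_eq_zero fun j _ => ?_
      split_ifs with h
      · simp [Matrix.single, hi]
      · rfl
    · intro habs; exact absurd (Finset.mem_univ i') habs
  have hrow : ∀ (c x' : G), (∃ i, g i = x') → (∃ i, g i = x' * c) →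
      ∀ j', A c (φ x') j' = if j' = φ (x' * c) then 1 else 0 := by
    intro c x' h1 h2 j'
    rw [hAentry]
    have hg1 : g (φ x') = x' := hφ x' h1
    have hg2 : g (φ (x' * c)) = x' * c := hφ _ h2
    by_cases hj : j' = φ (x' * c)
    · subst hj
      rw [if_pos, if_pos rfl]
      refine ⟨by rw [hg1], by rw [hg2], by rw [hg1, hg2, inv_mul_cancel_left]⟩
    · rw [if_neg hj, if_neg]
      rintro ⟨e1, e2, e3⟩
      apply hj
      have hgj : g j' = x' * c := by
        rw [hg1] at e3
        rw [← e3, mul_inv_cancel_left]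
      rw [← e2, hgj]
  have hprod : ∀ (l' : List (ℕ × G)) (x' : G),
      (∀ t ≤ l'.length, ∃ i, g i = x' * pp l' t) →
      ∀ j', ((l'.map fun kc => A kc.2).prod) (φ x') j' =
        if j' = φ (x' * pp l' l'.length) then 1 else 0 := by
    intro l'
    induction l' with
    | nil =>
      intro x' _ j'
      simp only [List.map_nil, List.prod_nil, Matrix.one_apply, List.length_nil]
      simp only [pp_zero, mul_one]
      by_cases hj : j' = φ x' <;> simp [hj, eq_comm]
    | cons kc l' ih =>
      intro x' hx' j'
      rw [List.map_cons, List.prod_cons, Matrix.mul_apply]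
      have h0 : ∃ i, g i = x' := by simpa [pp] using hx' 0 (Nat.zero_le _)
      have h1 : ∃ i, g i = x' * kc.2 := by
        have := hx' 1 (by simp)
        simpa [pp_cons, pp] using this
      have hcol : ∀ m : Fin n, A kc.2 (φ x') m * ((l'.map fun kc => A kc.2).prod) m j'
          = (if m = φ (x' * kc.2) then 1 else 0) * ((l'.map fun kc => A kc.2).prod) m j' := by
        intro m; rw [hrow kc.2 x' h0 h1 m]
      rw [Finset.sum_congr rfl fun m _ => hcol m]
      simp only [ite_mul, one_mul, zero_mul]
      rw [Finset.sum_ite_eq' Finset.univ (φ (x' * kc.2))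
        (fun m => ((l'.map fun kc => A kc.2).prod) m j'), if_pos (Finset.mem_univ _)]
      have hcov : ∀ t ≤ l'.length, ∃ i, g i = x' * kc.2 * pp l' t := by
        intro t ht
        have := hx' (t + 1) (by simpa using Nat.succ_le_succ ht)
        rwa [pp_cons, ← mul_assoc] at this
      rw [ih (x' * kc.2) hcov j', List.length_cons, pp_cons, ← mul_assoc]
  -- now derive the contradiction
  have ha : ∀ k c, (fun kc : ℕ × G => A kc.2) (k, c) ∈ gradeR F g c := fun k c => hAmem c
  have h0 := hid (fun kc => A kc.2) ha
  unfold evalHom at h0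
  rw [lift_of_ofList] at h0
  have hcov : ∀ t ≤ l.length, ∃ i, g i = x * pp l t := by
    intro t ht
    obtain ⟨i, hi⟩ := hx t ht
    exact ⟨i, hi.symm⟩
  have := hprod l x hcov (φ (x * pp l l.length))
  rw [if_pos rfl, h0] at this
  simp at this

end Stmt16Aux

namespace Stmt16Aux

variable {F G : Type*} [Field F] [Group G] {n : ℕ}

lemma pp_mkW (s : ℕ → G) : ∀ (ts : List ℕ) (prev u : ℕ), u ≤ ts.length →
    pp (mkW s prev ts) u = (s prev)⁻¹ * s ((prev :: ts).getD u 0) := by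
  intro ts
  induction ts with
  | nil =>
    intro prev u hu
    simp only [List.length_nil, Nat.le_zero] at hu
    subst hu
    simp [mkW, pp]
  | cons t ts ih =>
    intro prev u hu
    match u with
    | 0 => simp [pp]
    | u + 1 =>
      rw [show mkW s prev (t :: ts) =
        (Nat.pair prev t, (s prev)⁻¹ * s t) :: mkW s t ts from rfl, pp_cons]
      rw [ih t u (by simpa using Nat.le_of_succ_le_succ hu)]
      rw [show ((prev :: t :: ts).getD (u + 1) 0) = ((t :: ts).getD u 0) from rfl]
      group

lemma le_getLastD : ∀ (ts : List ℕ) (prev : ℕ), List.Chain (· ≤ ·) prev ts →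
    prev ≤ ts.getLastD prev
  | [], _, _ => le_refl _
  | t :: ts, prev, hch => by
    rw [List.getLastD_cons]
    exact le_trans (List.chain_cons.mp hch).1 (le_getLastD ts t (List.chain_cons.mp hch).2)

lemma map_v_prod (lW : List (ℕ × G)) (v : ℕ × G → FreeG F G)
    (hv : ∀ a b : ℕ, a ≤ b → b ≤ lW.length →
      v (Nat.pair a b, (pp lW a)⁻¹ * pp lW b) =
        MonoidAlgebra.of F (FreeMonoid (ℕ × G)) (FreeMonoid.ofList ((lW.take b).drop a))) :
    ∀ (ts : List ℕ) (prev : ℕ), List.Chain (· ≤ ·) prev ts → (∀ t ∈ ts, t ≤ lW.length) →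
      prev ≤ lW.length →
    ((mkW (pp lW) prev ts).map v).prod =
      MonoidAlgebra.of F (FreeMonoid (ℕ × G))
        (FreeMonoid.ofList ((lW.take (ts.getLastD prev)).drop prev)) := by
  intro ts
  induction ts with
  | nil =>
    intro prev _ _ _
    have h1 : (lW.take prev).drop prev = [] :=
      List.drop_eq_nil_of_le (by rw [List.length_take]; exact min_le_left _ _)
    rw [show ([] : List ℕ).getLastD prev = prev from rfl, h1]
    simp [mkW]
    rfl
  | cons t ts ih =>
    intro prev hch hle hprev
    obtain ⟨h1, hch'⟩ := List.chain_cons.mp hch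
    have ht : t ≤ lW.length := hle t List.mem_cons_self
    rw [show mkW (pp lW) prev (t :: ts) =
      (Nat.pair prev t, (pp lW prev)⁻¹ * pp lW t) :: mkW (pp lW) t ts from rfl]
    rw [List.map_cons, List.prod_cons, hv prev t h1 ht,
      ih t hch' (fun u hu => hle u (List.mem_cons_of_mem _ hu)) ht]
    rw [← _root_.map_mul, ← FreeMonoid.ofList_append,
      chunk_append lW h1 ht (le_getLastD ts t hch'), List.getLastD_cons]

end Stmt16Aux


open Stmt16Aux

/-- If a graded monomial x_{i_1,h_1} ⋯ x_{i_p,h_p} is a graded identity of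
M_n(F) with an elementary G-grading, then it is a consequence of (lies in the T_G-ideal
generated by) a graded monomial identity of M_n(F) of length at most 2n−1. -/
theorem stmt_16 (F : Type*) [Field F] [Infinite F] (G : Type*) [Group G] (n : ℕ)
    (g : Fin n → G)
    (p : ℕ) (idx : Fin p → ℕ) (h : Fin p → G)
    (hid : IsGId g (MonoidAlgebra.of F (FreeMonoid (ℕ × G))
      (FreeMonoid.ofList (List.ofFn fun k : Fin p => (idx k, h k))) : FreeG F G)) :
    ∃ w : FreeMonoid (ℕ × G),
      (FreeMonoid.toList w).length ≤ 2 * n - 1 ∧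
      IsGId g (MonoidAlgebra.of F (FreeMonoid (ℕ × G)) w : FreeG F G) ∧
      (MonoidAlgebra.of F (FreeMonoid (ℕ × G))
        (FreeMonoid.ofList (List.ofFn fun k : Fin p => (idx k, h k))) : FreeG F G)
        ∈ TIdealGen {(MonoidAlgebra.of F (FreeMonoid (ℕ × G)) w : FreeG F G)} := by

  classical
  set lW : List (ℕ × G) := List.ofFn (fun k : Fin p => (idx k, h k)) with hlW
  have hnc := noCover_of_isGId lW hid
  choose tc htle htne using fun i : Fin n => hnc (g i)
  set L : List ℕ := (Finset.image tc Finset.univ).sort (· ≤ ·) with hL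
  have hsort : List.Pairwise (· ≤ ·) L := Finset.pairwise_sort _ _
  have hmemL : ∀ i : Fin n, tc i ∈ L := fun i =>
    (Finset.mem_sort _).mpr (Finset.mem_image_of_mem tc (Finset.mem_univ i))
  have hLle : ∀ t ∈ L, t ≤ lW.length := by
    intro t htl
    obtain ⟨i, -, rfl⟩ := Finset.mem_image.mp ((Finset.mem_sort _).mp htl)
    exact htle i
  have hlenL : L.length ≤ n := by
    rw [hL, Finset.length_sort]
    exact le_trans Finset.card_image_le (by simp)
  have hchain : List.Chain (· ≤ ·) 0 L :=
    List.isChain_iff_pairwise.mpr (List.Pairwise.cons (fun b _ => Nat.zero_le b) hsort)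
  refine ⟨FreeMonoid.ofList (mkW (pp lW) 0 L), ?_, ?_, ?_⟩
  · rw [FreeMonoid.toList_ofList, length_mkW]
    omega
  · apply isGId_of_noCover
    intro z
    by_cases hz : ∃ i : Fin n, g i = z
    · obtain ⟨i, hi⟩ := hz
      obtain ⟨u, hu, hgu⟩ := List.mem_iff_getElem.mp (hmemL i)
      refine ⟨u + 1, ?_, ?_⟩
      · rw [length_mkW]; exact hu
      · intro i'
        rw [pp_mkW _ _ _ _ (show u + 1 ≤ L.length from hu)]
        have hgd : (0 :: L).getD (u + 1) 0 = tc i := by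
          rw [show (0 :: L).getD (u + 1) 0 = L.getD u 0 from rfl,
            List.getD_eq_getElem L 0 hu, hgu]
        rw [hgd, pp_zero, inv_one, one_mul, ← hi]
        exact htne i i'
    · refine ⟨0, Nat.zero_le _, fun i' => ?_⟩
      rw [pp_zero, mul_one]
      exact fun e => hz ⟨i', e.symm⟩
  · intro I hI
    set v : ℕ × G → FreeG F G := fun kc =>
      if (Nat.unpair kc.1).1 ≤ (Nat.unpair kc.1).2 ∧ (Nat.unpair kc.1).2 ≤ lW.length ∧
          kc.2 = (pp lW (Nat.unpair kc.1).1)⁻¹ * pp lW (Nat.unpair kc.1).2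
        then MonoidAlgebra.of F (FreeMonoid (ℕ × G))
          (FreeMonoid.ofList ((lW.take (Nat.unpair kc.1).2).drop (Nat.unpair kc.1).1))
        else MonoidAlgebra.of F (FreeMonoid (ℕ × G)) (FreeMonoid.ofList [kc]) with hv
    have hadm : Admissible v := by
      intro k c w' hw'
      rw [hv] at hw'
      simp only at hw'
      split_ifs at hw' with hcond
      · rw [MonoidAlgebra.of_apply, MonoidAlgebra.coeff_single, Finsupp.support_single_ne_zero _ one_ne_zero,
          Finset.mem_singleton] at hw'
        subst hw'
        obtain ⟨hab, hbl, hc⟩ := hcond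
        have hch := pp_chunk lW hab
        rw [wdeg, FreeMonoid.toList_ofList]
        rw [show (((lW.take (Nat.unpair (k, c).1).2).drop (Nat.unpair (k, c).1).1).map
          Prod.snd).prod = (pp lW (Nat.unpair (k, c).1).1)⁻¹ * pp lW (Nat.unpair (k, c).1).2
          from by rw [← pp_chunk lW hab, inv_mul_cancel_left]]
        exact hc.symm
      · rw [MonoidAlgebra.of_apply, MonoidAlgebra.coeff_single, Finsupp.support_single_ne_zero _ one_ne_zero,
          Finset.mem_singleton] at hw'
        subst hw'
        simp [wdeg]
    have hsub := hI _ rfl v hadm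
    unfold substHom at hsub
    rw [lift_of_ofList] at hsub
    rw [map_v_prod lW v ?hveq L 0 hchain hLle (Nat.zero_le _)] at hsub
    case hveq =>
      intro a b hab hbl
      rw [hv]
      simp only [Nat.unpair_pair]
      rw [if_pos ⟨hab, hbl, trivial⟩]
    rw [List.drop_zero] at hsub
    have hdecomp : MonoidAlgebra.of F (FreeMonoid (ℕ × G)) (FreeMonoid.ofList lW) =
        MonoidAlgebra.of F (FreeMonoid (ℕ × G)) (FreeMonoid.ofList (lW.take (L.getLastD 0))) *
        MonoidAlgebra.of F (FreeMonoid (ℕ × G)) (FreeMonoid.ofList (lW.drop (L.getLastD 0))) := by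
      rw [← _root_.map_mul, ← FreeMonoid.ofList_append, List.take_append_drop]
    rw [hdecomp]
    exact I.mul_mem_right _ _ hsub


end
end

section
/- Suppose two products of generic (G,*)-matrices A_{i_1,h_1}^{ε_1}⋯A_{i_r,h_r}^{ε_r} and A_{j_1,h'_1}^{η_1}⋯A_{j_l,h'_l}^{η_l} have the same nonzero entry in the same position. Then r = l and there is a permutation σ ∈ S_r with j_q = i_{σ(q)} and h'_q = h_{σ(q)} for all q; in particular the difference of the two corresponding monomials is strongly multi-homogeneous. -/
open Matrix
open scoped Classical

lemma aux_perm_comp {α : Type*} : ∀ {r : ℕ} (f f' : Fin r → α),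
    (List.ofFn f).Perm (List.ofFn f') → ∃ σ : Equiv.Perm (Fin r), f' = f ∘ σ := by
  intro r
  induction r with
  | zero => exact fun f f' _ => ⟨1, funext fun x => x.elim0⟩
  | succ r ih =>
    intro f f' hperm
    have h0 : f' 0 ∈ List.ofFn f := hperm.symm.mem_iff.mp (by
      rw [List.mem_ofFn]; exact ⟨0, rfl⟩)
    rw [List.mem_ofFn] at h0
    obtain ⟨k, hk⟩ := h0
    set τ := Equiv.swap (0 : Fin (r+1)) k with hτ
    have hperm2 : (List.ofFn (f ∘ τ)).Perm (List.ofFn f') :=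
      (Equiv.Perm.ofFn_comp_perm τ f).trans hperm
    rw [List.ofFn_succ, List.ofFn_succ] at hperm2
    have hhead : (f ∘ τ) 0 = f' 0 := by simp [hτ, hk]
    rw [hhead] at hperm2
    have htail := hperm2.cons_inv
    obtain ⟨σ', hσ'⟩ := ih _ _ htail
    refine ⟨(Equiv.Perm.decomposeFin.symm (0, σ')).trans τ, ?_⟩
    funext x
    refine Fin.cases ?_ (fun m => ?_) x
    · simpa [hτ] using hk.symm
    · have := congrFun hσ' m
      simpa using this

lemma aux_prod_entry {F : Type*} [Field F] {n : ℕ} {α : Type*}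
    (φ : (ℕ × Fin n × Fin n) → α) :
    ∀ (L : List (α × Matrix (Fin n) (Fin n) (MvPolynomial (ℕ × Fin n × Fin n) F))),
    (∀ tM ∈ L, ∀ p : Fin n, (∀ q', tM.2 p q' = 0) ∨
      ∃ q₀ v, tM.2 p q₀ = MvPolynomial.X v ∧ φ v = tM.1 ∧ ∀ q', q' ≠ q₀ → tM.2 p q' = 0) →
    ∀ p q : Fin n, (L.map Prod.snd).prod p q = 0 ∨
      ∃ V : List (ℕ × Fin n × Fin n), V.map φ = L.map Prod.fst ∧
        (L.map Prod.snd).prod p q = (V.map MvPolynomial.X).prod := by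
  intro L
  induction L with
  | nil =>
    intro _ p q
    by_cases hpq : p = q
    · exact Or.inr ⟨[], rfl, by simp [hpq, Matrix.one_apply]⟩
    · exact Or.inl (by simp [Matrix.one_apply, hpq])
  | cons tM L ih =>
    intro H p q
    have hM := H tM List.mem_cons_self p
    have hL := ih (fun t ht => H t (List.mem_cons_of_mem _ ht))
    rw [List.map_cons, List.map_cons, List.prod_cons, Matrix.mul_apply]
    rcases hM with h0 | ⟨q₀, v, hX, hφ, hrest⟩
    · exact Or.inl (by simp [h0])
    · have hsum : ∑ k, tM.2 p k * (L.map Prod.snd).prod k q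
        = tM.2 p q₀ * (L.map Prod.snd).prod q₀ q := by
        apply Finset.sum_eq_single
        · intro b _ hb; rw [hrest b hb, zero_mul]
        · intro hb; exact absurd (Finset.mem_univ q₀) hb
      rw [hsum]
      rcases hL q₀ q with h0 | ⟨V, hVφ, hVX⟩
      · exact Or.inl (by rw [h0, mul_zero])
      · exact Or.inr ⟨v :: V, by simp [hVφ, hφ], by rw [hX, hVX]; simp⟩

lemma aux_listX {F : Type*} [Field F] {σ : Type*} [DecidableEq σ] (V : List σ) :
    (V.map MvPolynomial.X).prod
      = MvPolynomial.monomial (Multiset.toFinsupp (↑V : Multiset σ)) (1 : F) := by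
  induction V with
  | nil => simp
  | cons v V ih =>
    rw [List.map_cons, List.prod_cons, ih]
    rw [show ((↑(v :: V) : Multiset σ)) = v ::ₘ (↑V : Multiset σ) from rfl]
    rw [show (v ::ₘ (↑V : Multiset σ)) = {v} + ↑V from by simp,
      Multiset.toFinsupp_add, Multiset.toFinsupp_singleton,
      MvPolynomial.X, MvPolynomial.monomial_mul, one_mul]

/-- If two products of generic (G,*)-matrices
A_{i_1,h_1}^{ε_1}⋯A_{i_r,h_r}^{ε_r} and A_{j_1,h'_1}^{η_1}⋯A_{j_l,h'_l}^{η_l}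
have the same nonzero entry in the same position, then r = l and there is a
permutation σ ∈ S_r with j_q = i_{σ(q)} and h'_q = h_{σ(q)} for all q (so the
difference of the corresponding monomials is strongly multi-homogeneous). -/
theorem stmt_17 (F : Type*) [Field F] (G : Type*) [Group G] (n : ℕ)
    (g : Fin n → G) (hinj : Function.Injective g)
    (A : ℕ → G → Bool → Matrix (Fin n) (Fin n) (MvPolynomial (ℕ × Fin n × Fin n) F))
    (hA : ∀ (m : ℕ) (c : G) (p q : Fin n),
      (A m c false p q = if g p * c = g q then MvPolynomial.X (m, p, q) else 0) ∧
      A m c true = (A m c false)ᵀ)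
    (r l : ℕ) (i : Fin r → ℕ) (h : Fin r → G) (ε : Fin r → Bool)
    (j : Fin l → ℕ) (h' : Fin l → G) (η : Fin l → Bool)
    (p q : Fin n)
    (hsame : (List.ofFn fun k : Fin r => A (i k) (h k) (ε k)).prod p q =
             (List.ofFn fun k : Fin l => A (j k) (h' k) (η k)).prod p q)
    (hnz : (List.ofFn fun k : Fin r => A (i k) (h k) (ε k)).prod p q ≠ 0) :
    ∃ (hrl : r = l) (σ : Equiv.Perm (Fin r)),
      ∀ m : Fin r, j (Fin.cast hrl m) = i (σ m) ∧ h' (Fin.cast hrl m) = h (σ m) := by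
  set φ : (ℕ × Fin n × Fin n) → ℕ × G := fun v => (v.1, (g v.2.1)⁻¹ * g v.2.2) with hφdef
  -- each generic matrix has at most one nonzero entry in each row, and it is a variable
  have hrow : ∀ (m : ℕ) (c : G) (b : Bool) (p' : Fin n),
      (∀ q', A m c b p' q' = 0) ∨
        ∃ q₀ v, A m c b p' q₀ = MvPolynomial.X v ∧ φ v = (m, c) ∧
          ∀ q', q' ≠ q₀ → A m c b p' q' = 0 := by
    intro m c b p'
    cases b with
    | false =>
      by_cases hex : ∃ q₀, g p' * c = g q₀
      · obtain ⟨q₀, hq₀⟩ := hex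
        refine Or.inr ⟨q₀, (m, p', q₀), ?_, ?_, ?_⟩
        · rw [(hA m c p' q₀).1, if_pos hq₀]
        · simp only [hφdef, Prod.mk.injEq]
          refine ⟨trivial, ?_⟩
          rw [← hq₀]; group
        · intro q' hne
          rw [(hA m c p' q').1, if_neg]
          exact fun hc => hne (hinj (hc.symm.trans hq₀))
      · exact Or.inl fun q' => by
          rw [(hA m c p' q').1, if_neg (fun hc => hex ⟨q', hc⟩)]
    | true =>
      have ht : ∀ a b', A m c true a b' = A m c false b' a := by
        intro a b'; rw [(hA m c a b').2]; rfl
      by_cases hex : ∃ q₀, g q₀ * c = g p'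
      · obtain ⟨q₀, hq₀⟩ := hex
        refine Or.inr ⟨q₀, (m, q₀, p'), ?_, ?_, ?_⟩
        · rw [ht, (hA m c q₀ p').1, if_pos hq₀]
        · simp only [hφdef, Prod.mk.injEq]
          refine ⟨trivial, ?_⟩
          rw [← hq₀]; group
        · intro q' hne
          rw [ht, (hA m c q' p').1, if_neg]
          intro hc
          exact hne (hinj (mul_right_cancel (hc.trans hq₀.symm)))
      · exact Or.inl fun q' => by
          rw [ht, (hA m c q' p').1, if_neg (fun hc => hex ⟨q', hc⟩)]
  -- tagged lists
  set L1 : List ((ℕ × G) × Matrix (Fin n) (Fin n) (MvPolynomial (ℕ × Fin n × Fin n) F)) :=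
    List.ofFn (fun k : Fin r => ((i k, h k), A (i k) (h k) (ε k))) with hL1
  set L2 : List ((ℕ × G) × Matrix (Fin n) (Fin n) (MvPolynomial (ℕ × Fin n × Fin n) F)) :=
    List.ofFn (fun k : Fin l => ((j k, h' k), A (j k) (h' k) (η k))) with hL2
  have hL1snd : L1.map Prod.snd = List.ofFn fun k : Fin r => A (i k) (h k) (ε k) := by
    rw [hL1, List.map_ofFn]; rfl
  have hL2snd : L2.map Prod.snd = List.ofFn fun k : Fin l => A (j k) (h' k) (η k) := by
    rw [hL2, List.map_ofFn]; rfl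
  have hL1fst : L1.map Prod.fst = List.ofFn fun k : Fin r => (i k, h k) := by
    rw [hL1, List.map_ofFn]; rfl
  have hL2fst : L2.map Prod.fst = List.ofFn fun k : Fin l => (j k, h' k) := by
    rw [hL2, List.map_ofFn]; rfl
  have hH1 : ∀ tM ∈ L1, ∀ p' : Fin n, (∀ q', tM.2 p' q' = 0) ∨
      ∃ q₀ v, tM.2 p' q₀ = MvPolynomial.X v ∧ φ v = tM.1 ∧
        ∀ q', q' ≠ q₀ → tM.2 p' q' = 0 := by
    intro tM htM
    rw [hL1, List.mem_ofFn] at htM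
    obtain ⟨k, rfl⟩ := htM
    exact hrow (i k) (h k) (ε k)
  have hH2 : ∀ tM ∈ L2, ∀ p' : Fin n, (∀ q', tM.2 p' q' = 0) ∨
      ∃ q₀ v, tM.2 p' q₀ = MvPolynomial.X v ∧ φ v = tM.1 ∧
        ∀ q', q' ≠ q₀ → tM.2 p' q' = 0 := by
    intro tM htM
    rw [hL2, List.mem_ofFn] at htM
    obtain ⟨k, rfl⟩ := htM
    exact hrow (j k) (h' k) (η k)
  rcases aux_prod_entry φ L1 hH1 p q with h0 | ⟨V, hVφ, hVX⟩
  · rw [hL1snd] at h0; exact absurd h0 hnz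
  rcases aux_prod_entry φ L2 hH2 p q with h0 | ⟨W, hWφ, hWX⟩
  · rw [hL2snd] at h0; exact absurd h0 (hsame ▸ hnz)
  rw [hL1snd] at hVX
  rw [hL2snd] at hWX
  have hXeq : (V.map MvPolynomial.X).prod = ((W.map MvPolynomial.X).prod
      : MvPolynomial (ℕ × Fin n × Fin n) F) := by
    rw [← hVX, ← hWX, hsame]
  rw [aux_listX, aux_listX] at hXeq
  have hfs := MvPolynomial.monomial_left_injective (one_ne_zero (α := F)) hXeq
  have hms : (↑V : Multiset (ℕ × Fin n × Fin n)) = ↑W := by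
    exact Multiset.toFinsupp.injective hfs
  have hperm : V.Perm W := Multiset.coe_eq_coe.mp hms
  have hperm2 : (List.ofFn fun k : Fin r => (i k, h k)).Perm
      (List.ofFn fun k : Fin l => (j k, h' k)) := by
    rw [← hL1fst, ← hL2fst, ← hVφ, ← hWφ]
    exact hperm.map φ
  have hrl : r = l := by simpa using hperm2.length_eq
  subst hrl
  obtain ⟨σ, hσ⟩ := aux_perm_comp (fun k : Fin r => (i k, h k))
    (fun k : Fin r => (j k, h' k)) hperm2
  refine ⟨rfl, σ, fun m => ?_⟩
  have := congrFun hσ m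
  simp only [Function.comp_apply, Prod.mk.injEq] at this
  simpa [Fin.cast_refl] using ⟨this.1, this.2⟩
end
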